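/- For 0 < t < 1 and h > 0 with a = t/h and b = (1-t)/h, for every nonnegative integer n: ∑_{k≥0, 2k≤n} B_k^{n-k}(t;h) = ∫_0^1 x^{a-1}(1-x)^{b-1}/((1+x)B(a,b)) dx + (-1)^{n+2} ∫_0^1 x^{a+n}(1-x)^{b-1}/((1+x)B(a,b)) dx. -/

import Mathlib

open MeasureTheory Set

section HBAux

/-! ### The Fibonacci-type polynomial -/

noncomputable def Qpoly (n : ℕ) (x : ℝ) : ℝ :=
  ∑ k ∈ Finset.range (n + 1), ((n - k).choose k : ℝ) * x ^ k * (1 - x) ^ (n - 2 * k)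

lemma Qpoly_zero (x : ℝ) : Qpoly 0 x = 1 := by simp [Qpoly]

lemma Qpoly_one (x : ℝ) : Qpoly 1 x = 1 - x := by
  simp [Qpoly, Finset.sum_range_succ]

lemma Qpoly_rec (n : ℕ) (x : ℝ) :
    Qpoly (n + 2) x = (1 - x) * Qpoly (n + 1) x + x * Qpoly n x := by
  have h1 : Qpoly (n + 2) x =
      (∑ k ∈ Finset.range (n + 2), ((n - k).choose k : ℝ) * x ^ (k+1) * (1-x) ^ (n - 2*k))
      + (∑ k ∈ Finset.range (n + 2), ((n - k).choose (k+1) : ℝ) * x ^ (k+1) * (1-x) ^ (n - 2*k))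
      + (1 - x) ^ (n + 2) := by
    rw [Qpoly, Finset.sum_range_succ']
    have : ∀ k ∈ Finset.range (n + 2),
        ((n + 2 - (k+1)).choose (k+1) : ℝ) * x ^ (k+1) * (1-x) ^ (n + 2 - 2*(k+1)) =
        ((n - k).choose k : ℝ) * x ^ (k+1) * (1-x) ^ (n - 2*k)
        + ((n - k).choose (k+1) : ℝ) * x ^ (k+1) * (1-x) ^ (n - 2*k) := by
      intro k hk
      have hk' : k < n + 2 := Finset.mem_range.mp hk
      have he : n + 2 - 2*(k+1) = n - 2*k := by omega
      rcases le_or_gt k n with h | h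
      · have h2 : n + 2 - (k+1) = (n - k) + 1 := by omega
        rw [he, h2, Nat.choose_succ_succ]
        push_cast; ring
      · have hk2 : k = n + 1 := by omega
        subst hk2
        have c1 : (n + 2 - (n + 1 + 1)).choose (n + 1 + 1) = 0 :=
          Nat.choose_eq_zero_of_lt (by omega)
        have c2 : (n - (n + 1)).choose (n + 1) = 0 := Nat.choose_eq_zero_of_lt (by omega)
        have c3 : (n - (n + 1)).choose (n + 1 + 1) = 0 := Nat.choose_eq_zero_of_lt (by omega)
        rw [c1, c2, c3]
        simp
    rw [Finset.sum_congr rfl this, Finset.sum_add_distrib]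
    simp
  have h2 : (∑ k ∈ Finset.range (n + 2), ((n - k).choose k : ℝ) * x ^ (k+1) * (1-x) ^ (n - 2*k))
      = x * Qpoly n x := by
    rw [Finset.sum_range_succ, Nat.choose_eq_zero_of_lt (by omega)]
    rw [Qpoly, Finset.mul_sum]
    simp only [Nat.cast_zero, zero_mul, mul_zero, add_zero, zero_add]
    refine (Finset.sum_congr rfl fun k _ => ?_).symm
    ring
  have h3 : (∑ k ∈ Finset.range (n + 2), ((n - k).choose (k+1) : ℝ) * x ^ (k+1) * (1-x) ^ (n - 2*k))
      = (1 - x) * (Qpoly (n+1) x - (1-x)^(n+1)) := by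
    have hq : Qpoly (n+1) x = (∑ k ∈ Finset.range (n + 1),
        ((n - k).choose (k+1) : ℝ) * x ^ (k+1) * (1-x) ^ (n - 1 - 2*k)) + (1-x)^(n+1) := by
      rw [Qpoly, Finset.sum_range_succ']
      congr 1
      · refine Finset.sum_congr rfl fun k _ => ?_
        have e1 : n + 1 - (k+1) = n - k := by omega
        have e2 : n + 1 - 2*(k+1) = n - 1 - 2*k := by omega
        rw [e1, e2]
      · simp
    rw [hq]
    rw [Finset.sum_range_succ, Nat.choose_eq_zero_of_lt (by omega)]
    simp only [Nat.cast_zero, zero_mul, add_zero]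
    rw [add_sub_cancel_right, Finset.mul_sum]
    refine Finset.sum_congr rfl fun k hk => ?_
    rcases le_or_gt (2*k + 1) n with h | h
    · have e : n - 2*k = (n - 1 - 2*k) + 1 := by omega
      rw [e, pow_succ]
      ring
    · rw [Nat.choose_eq_zero_of_lt (by omega)]
      simp
  rw [h1, h2, h3]
  ring

lemma Qpoly_eval (n : ℕ) (x : ℝ) : (1 + x) * Qpoly n x = 1 + (-1)^n * x^(n+1) := by
  induction n using Nat.twoStepInduction with
  | zero => rw [Qpoly_zero]; ring
  | one => rw [Qpoly_one]; ring
  | more n ih1 ih2 =>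
    rw [Qpoly_rec, mul_add, mul_left_comm, mul_left_comm (1+x), ih1, ih2]
    ring

lemma sum_eq_Q (n : ℕ) (x : ℝ) :
    ∑ k ∈ Finset.range (n / 2 + 1), ((n - k).choose k : ℝ) * (x ^ k * (1 - x) ^ (n - 2 * k))
      = Qpoly n x := by
  rw [Qpoly]
  rw [show (∑ k ∈ Finset.range (n + 1), ((n - k).choose k : ℝ) * x ^ k * (1 - x) ^ (n - 2 * k))
      = ∑ k ∈ Finset.range (n + 1), ((n - k).choose k : ℝ) * (x ^ k * (1 - x) ^ (n - 2 * k)) from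
    Finset.sum_congr rfl fun k _ => by ring]
  refine Finset.sum_subset ?_ fun k hk1 hk2 => ?_
  · intro k hk
    simp only [Finset.mem_range] at *
    omega
  · simp only [Finset.mem_range] at hk1 hk2
    rw [Nat.choose_eq_zero_of_lt (by omega)]
    simp

/-! ### The real Beta integral -/

noncomputable def Bint (a b : ℝ) : ℝ := ∫ x in (0:ℝ)..1, x ^ (a-1) * (1-x) ^ (b-1)

lemma coe_eq (a b x : ℝ) (hx : x ∈ Ioc (0:ℝ) 1) :
    ((x ^ (a-1) * (1-x) ^ (b-1) : ℝ) : ℂ) = (x:ℂ) ^ ((a:ℂ)-1) * (1-(x:ℂ)) ^ ((b:ℂ)-1) := by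
  have h1 : (0:ℝ) ≤ x := hx.1.le
  have h2 : (0:ℝ) ≤ 1 - x := by linarith [hx.2]
  rw [Complex.ofReal_mul, Complex.ofReal_cpow h1, Complex.ofReal_cpow h2]
  norm_cast

lemma beta_integrableOn {a b : ℝ} (ha : 0 < a) (hb : 0 < b) :
    IntegrableOn (fun x : ℝ => x ^ (a-1) * (1-x) ^ (b-1)) (Ioc (0:ℝ) 1) := by
  have hc := Complex.betaIntegral_convergent (u := a) (v := b) (by simpa) (by simpa)
  rw [intervalIntegrable_iff_integrableOn_Ioc_of_le zero_le_one] at hc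
  refine hc.re.congr ?_
  refine (ae_restrict_iff' measurableSet_Ioc).2 (ae_of_all _ fun x hx => ?_)
  simp only [RCLike.re_to_complex]
  rw [← coe_eq a b x hx, Complex.ofReal_re]

lemma Bint_coe (a b : ℝ) : ((Bint a b : ℝ) : ℂ) = Complex.betaIntegral a b := by
  rw [Bint, Complex.betaIntegral, ← intervalIntegral.integral_ofReal,
    intervalIntegral.integral_of_le zero_le_one, intervalIntegral.integral_of_le zero_le_one]
  exact setIntegral_congr_fun measurableSet_Ioc fun x hx => coe_eq a b x hx

lemma Bint_pos {a b : ℝ} (ha : 0 < a) (hb : 0 < b) : 0 < Bint a b := by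
  apply intervalIntegral.intervalIntegral_pos_of_pos_on
  · exact (intervalIntegrable_iff_integrableOn_Ioc_of_le zero_le_one).2 (beta_integrableOn ha hb)
  · intro x hx
    exact mul_pos (Real.rpow_pos_of_pos hx.1 _)
      (Real.rpow_pos_of_pos (by linarith [hx.2]) _)
  · norm_num

lemma Bint_rec {a b : ℝ} (ha : 0 < a) (hb : 0 < b) :
    a * Bint a (b+1) = b * Bint (a+1) b := by
  have h := Complex.betaIntegral_recurrence (u := a) (v := b) (by simpa) (by simpa)
  have e1 := Bint_coe a (b+1)
  have e2 := Bint_coe (a+1) b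
  push_cast at e1 e2
  rw [← e1, ← e2] at h
  exact_mod_cast h

lemma Bint_add {a b : ℝ} (ha : 0 < a) (hb : 0 < b) :
    Bint a b = Bint (a+1) b + Bint a (b+1) := by
  have i1 := beta_integrableOn (a := a+1) (b := b) (by linarith) hb
  have i2 := beta_integrableOn (a := a) (b := b+1) ha (by linarith)
  rw [Bint, Bint, Bint, intervalIntegral.integral_of_le zero_le_one,
    intervalIntegral.integral_of_le zero_le_one, intervalIntegral.integral_of_le zero_le_one,
    ← MeasureTheory.integral_add i1 i2]
  refine setIntegral_congr_fun measurableSet_Ioc fun x hx => ?_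
  have hx0 : (0:ℝ) < x := hx.1
  have e1 : x ^ (a+1-1) = x ^ (a-1) * x := by
    rw [show a+1-1 = (a-1)+1 by ring, Real.rpow_add_one hx0.ne']
  have e2 : (1-x) ^ (b+1-1) = (1-x) ^ (b-1) * (1-x) := by
    rcases lt_or_eq_of_le hx.2 with h | h
    · rw [show b+1-1 = (b-1)+1 by ring, Real.rpow_add_one (by linarith : (1:ℝ)-x ≠ 0)]
    · rw [h]
      simp only [sub_self]
      rw [Real.zero_rpow (by linarith : b+1-1 ≠ 0)]
      simp
  simp only [e1, e2]
  ring

lemma Bint_succ_left {a b : ℝ} (ha : 0 < a) (hb : 0 < b) :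
    Bint (a+1) b = a/(a+b) * Bint a b := by
  have h1 := Bint_rec ha hb
  have h2 := Bint_add ha hb
  have key : a * Bint a b = (a+b) * Bint (a+1) b := by
    rw [h2, mul_add, h1]; ring
  have hab : a + b ≠ 0 := by positivity
  field_simp
  linarith [key]

lemma Bint_succ_right {a b : ℝ} (ha : 0 < a) (hb : 0 < b) :
    Bint a (b+1) = b/(a+b) * Bint a b := by
  have h1 := Bint_rec ha hb
  have h2 := Bint_add ha hb
  have key : b * Bint a b = (a+b) * Bint a (b+1) := by
    rw [h2, mul_add, ← h1]; ring
  have hab : a + b ≠ 0 := by positivity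
  field_simp
  linarith [key]

lemma Bint_shift {a b : ℝ} (ha : 0 < a) (hb : 0 < b) (k m : ℕ) :
    Bint (a + k) (b + m) =
      (∏ i ∈ Finset.range k, (a + i)) * (∏ i ∈ Finset.range m, (b + i)) /
        (∏ i ∈ Finset.range (k + m), (a + b + i)) * Bint a b := by
  induction k with
  | zero =>
    simp only [Nat.cast_zero, add_zero, Finset.range_zero, Finset.prod_empty, one_mul, zero_add]
    induction m with
    | zero => simp
    | succ m ih =>
      have hD : 0 < ∏ i ∈ Finset.range m, (a + b + i) :=
        Finset.prod_pos fun i _ => by positivity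
      have hbm : (0:ℝ) < b + m := by positivity
      have hstep := Bint_succ_right (b := b + m) ha hbm
      rw [show b + (↑(m+1) : ℝ) = (b + m) + 1 by push_cast; ring, hstep, ih,
        Finset.prod_range_succ, Finset.prod_range_succ]
      rw [show a + (b + (m:ℝ)) = a + b + m by ring]
      have habm : (0:ℝ) < a + b + m := by positivity
      field_simp
  | succ k ih =>
    have hD : 0 < ∏ i ∈ Finset.range (k + m), (a + b + i) :=
      Finset.prod_pos fun i _ => by positivity
    have hak : (0:ℝ) < a + k := by positivity
    have hbm : (0:ℝ) < b + m := by positivity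
    have habkm : (0:ℝ) < a + k + (b + m) := by positivity
    have hstep := Bint_succ_left (a := a + k) (b := b + m) hak hbm
    rw [show a + (↑(k+1) : ℝ) = (a + k) + 1 by push_cast; ring, hstep, ih,
      show k + 1 + m = (k + m) + 1 by omega, Finset.prod_range_succ, Finset.prod_range_succ]
    rw [show a + b + (↑(k+m) : ℝ) = a + k + (b + m) by push_cast; ring]
    field_simp

lemma Bint_shift_integral {a b : ℝ} (hb : 0 < b) (k m : ℕ) :
    Bint (a + k) (b + m)
      = ∫ x in Ioc (0:ℝ) 1, x ^ (a-1) * (1-x) ^ (b-1) * (x ^ k * (1-x) ^ m) := by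
  rw [Bint, intervalIntegral.integral_of_le zero_le_one]
  refine setIntegral_congr_fun measurableSet_Ioc fun x hx => ?_
  have hx0 : (0:ℝ) < x := hx.1
  have e1 : x ^ (a + k - 1) = x ^ (a-1) * x ^ k := by
    rw [← Real.rpow_natCast x k, ← Real.rpow_add hx0]
    congr 1
    ring
  have e2 : (1-x) ^ (b + m - 1) = (1-x) ^ (b-1) * (1-x) ^ m := by
    rcases lt_or_eq_of_le hx.2 with h | h
    · rw [← Real.rpow_natCast (1-x) m, ← Real.rpow_add (by linarith : (0:ℝ) < 1 - x)]
      congr 1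
      ring
    · rw [h]
      simp only [sub_self]
      cases m with
      | zero => norm_num
      | succ m =>
        have hmn : (0:ℝ) ≤ m := Nat.cast_nonneg m
        rw [Real.zero_rpow (by push_cast; nlinarith : b + ((m+1:ℕ):ℝ) - 1 ≠ 0),
          zero_pow (Nat.succ_ne_zero m)]
        ring
  rw [e1, e2]
  ring

lemma w_mul_integrableOn {a b : ℝ} (ha : 0 < a) (hb : 0 < b) {g : ℝ → ℝ}
    (hg : Measurable g) (hbd : ∀ x ∈ Ioc (0:ℝ) 1, |g x| ≤ 1) :
    IntegrableOn (fun x : ℝ => x ^ (a-1) * (1-x) ^ (b-1) * g x) (Ioc (0:ℝ) 1) := by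
  have base := beta_integrableOn ha hb
  have h2 : IntegrableOn (fun x : ℝ => g x * (x ^ (a-1) * (1-x) ^ (b-1))) (Ioc (0:ℝ) 1) := by
    refine base.bdd_mul (c := 1) hg.aestronglyMeasurable.restrict ?_
    refine (ae_restrict_iff' measurableSet_Ioc).2 (ae_of_all _ fun x hx => ?_)
    simpa [Real.norm_eq_abs] using hbd x hx
  exact h2.congr (ae_of_all _ fun x => by ring)

end HBAux

/-- The h-Bernstein polynomial (Pólya–Eggenberger probability mass function). -/
noncomputable def hBernstein (n k : ℕ) (t h : ℝ) : ℝ :=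
  (n.choose k : ℝ) *
    ((∏ i ∈ Finset.range k, (t + i * h)) * ∏ i ∈ Finset.range (n - k), (1 - t + i * h)) /
    ∏ i ∈ Finset.range n, (1 + i * h)

lemma hBernstein_eq (t h : ℝ) (hh : 0 < h) (a b : ℝ) (ha : a = t / h) (hb : b = (1 - t) / h)
    (ha' : 0 < a) (hb' : 0 < b) (n k m : ℕ) (hkm : k + m = n) :
    hBernstein n k t h = (n.choose k : ℝ) *
      ((∏ i ∈ Finset.range k, (a + i)) * (∏ i ∈ Finset.range m, (b + i)) /
        (∏ i ∈ Finset.range n, (a + b + i))) := by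
  have hta : t = a * h := by rw [ha]; field_simp
  have htb : 1 - t = b * h := by rw [hb]; field_simp
  have hnk : n - k = m := by omega
  rw [hBernstein, hnk]
  have p1 : ∏ i ∈ Finset.range k, (t + (i:ℝ) * h)
      = (∏ i ∈ Finset.range k, (a + i)) * h ^ k := by
    rw [show (∏ i ∈ Finset.range k, (t + (i:ℝ) * h))
        = ∏ i ∈ Finset.range k, ((a + i) * h) from
      Finset.prod_congr rfl fun i _ => by rw [hta]; ring]
    rw [Finset.prod_mul_distrib, Finset.prod_const, Finset.card_range]
  have p2 : ∏ i ∈ Finset.range m, (1 - t + (i:ℝ) * h)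
      = (∏ i ∈ Finset.range m, (b + i)) * h ^ m := by
    rw [show (∏ i ∈ Finset.range m, (1 - t + (i:ℝ) * h))
        = ∏ i ∈ Finset.range m, ((b + i) * h) from
      Finset.prod_congr rfl fun i _ => by rw [htb]; ring]
    rw [Finset.prod_mul_distrib, Finset.prod_const, Finset.card_range]
  have p3 : ∏ i ∈ Finset.range n, ((1:ℝ) + (i:ℝ) * h)
      = (∏ i ∈ Finset.range n, (a + b + i)) * h ^ n := by
    rw [show (∏ i ∈ Finset.range n, ((1:ℝ) + (i:ℝ) * h))
        = ∏ i ∈ Finset.range n, ((a + b + i) * h) from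
      Finset.prod_congr rfl fun i _ => by
        have h1 : (1:ℝ) = (a + b) * h := by rw [ha, hb]; field_simp; ring
        rw [h1]; ring]
    rw [Finset.prod_mul_distrib, Finset.prod_const, Finset.card_range]
  rw [p1, p2, p3]
  have hPc : (∏ i ∈ Finset.range n, (a + b + i)) ≠ 0 :=
    ne_of_gt (Finset.prod_pos fun i _ => by positivity)
  have hhn : h ^ n ≠ 0 := pow_ne_zero _ hh.ne'
  rw [← hkm, pow_add]
  field_simp

/-- For `0 < t < 1`, `h > 0`, `a = t/h`, `b = (1-t)/h` and every `n`:
`∑_{2k ≤ n} B_k^{n-k}(t;h)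
  = ∫_0^1 x^{a-1}(1-x)^{b-1}/((1+x)B(a,b)) dx + (-1)^{n+2} ∫_0^1 x^{a+n}(1-x)^{b-1}/((1+x)B(a,b)) dx`. -/
theorem hBernstein_short_diagonal_sum (t h : ℝ) (hh : 0 < h) (h0 : 0 < t) (ht : t < 1)
    (n : ℕ) (a b : ℝ) (ha : a = t / h) (hb : b = (1 - t) / h) :
    ∑ k ∈ Finset.range (n / 2 + 1), hBernstein (n - k) k t h =
      (∫ x in (0 : ℝ)..1,
          x ^ (a - 1) * (1 - x) ^ (b - 1) /
            ((1 + x) * ∫ y in (0 : ℝ)..1, y ^ (a - 1) * (1 - y) ^ (b - 1))) +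
      (-1 : ℝ) ^ (n + 2) *
        ∫ x in (0 : ℝ)..1,
          x ^ (a + n) * (1 - x) ^ (b - 1) /
            ((1 + x) * ∫ y in (0 : ℝ)..1, y ^ (a - 1) * (1 - y) ^ (b - 1)) := by
  have ha' : 0 < a := by rw [ha]; positivity
  have hb' : 0 < b := by rw [hb]; have : 0 < 1 - t := by linarith
                         positivity
  have hBpos : 0 < Bint a b := Bint_pos ha' hb'
  have hBne : Bint a b ≠ 0 := hBpos.ne'
  have hBdef : (∫ y in (0:ℝ)..1, y ^ (a - 1) * (1 - y) ^ (b - 1)) = Bint a b := rfl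
  have mg1 : Measurable fun x : ℝ => 1/(1+x) := by
    simp only [one_div]
    exact (measurable_const.add measurable_id).inv
  have mg2 : Measurable fun x : ℝ => x^(n+1) * (1/(1+x)) :=
    (measurable_id.pow_const (n+1)).mul mg1
  have mg3 : ∀ k : ℕ, Measurable fun x : ℝ => x^k * (1-x)^(n-2*k) := fun k =>
    (measurable_id.pow_const k).mul ((measurable_const.sub measurable_id).pow_const _)
  -- integrability of the pieces
  have i1 : IntegrableOn (fun x : ℝ => x ^ (a-1) * (1-x) ^ (b-1) * (1/(1+x))) (Ioc (0:ℝ) 1) := by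
    refine w_mul_integrableOn ha' hb' mg1 fun x hx => ?_
    have h1 : (1:ℝ) ≤ 1 + x := by linarith [hx.1.le]
    rw [abs_of_nonneg (by positivity : (0:ℝ) ≤ 1/(1+x))]
    rw [div_le_one (by linarith)]
    linarith
  have i2 : IntegrableOn
      (fun x : ℝ => x ^ (a-1) * (1-x) ^ (b-1) * (x^(n+1) * (1/(1+x)))) (Ioc (0:ℝ) 1) := by
    refine w_mul_integrableOn ha' hb' mg2 fun x hx => ?_
    have hxx : |x| ≤ 1 := abs_le.2 ⟨by linarith [hx.1.le], hx.2⟩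
    have h1 : (1:ℝ) ≤ 1 + x := by linarith [hx.1.le]
    rw [abs_mul, abs_pow]
    calc |x|^(n+1) * |1/(1+x)| ≤ 1 * 1 := by
          apply mul_le_mul _ _ (abs_nonneg _) zero_le_one
          · exact pow_le_one₀ (abs_nonneg _) hxx
          · rw [abs_of_nonneg (by positivity : (0:ℝ) ≤ 1/(1+x)), div_le_one (by linarith)]
            linarith
      _ = 1 := mul_one 1
  have ikey : ∀ k : ℕ, IntegrableOn
      (fun x : ℝ => x ^ (a-1) * (1-x) ^ (b-1) * (x^k * (1-x)^(n-2*k))) (Ioc (0:ℝ) 1) := by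
    intro k
    refine w_mul_integrableOn ha' hb' (mg3 k) fun x hx => ?_
    have hxx : |x| ≤ 1 := abs_le.2 ⟨by linarith [hx.1.le], hx.2⟩
    have hxy : |1-x| ≤ 1 := abs_le.2 ⟨by linarith [hx.2], by linarith [hx.1.le]⟩
    rw [abs_mul, abs_pow, abs_pow]
    calc |x|^k * |1-x|^(n-2*k) ≤ 1 * 1 := by
          apply mul_le_mul _ _ (pow_nonneg (abs_nonneg _) _) zero_le_one
          · exact pow_le_one₀ (abs_nonneg _) hxx
          · exact pow_le_one₀ (abs_nonneg _) hxy
      _ = 1 := mul_one 1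
  -- Step 1: each term of the LHS
  have lhs1 : ∑ k ∈ Finset.range (n / 2 + 1), hBernstein (n - k) k t h
      = ∑ k ∈ Finset.range (n / 2 + 1), ((n-k).choose k : ℝ) *
          (∫ x in Ioc (0:ℝ) 1, x ^ (a-1) * (1-x) ^ (b-1) * (x^k * (1-x)^(n-2*k))) / Bint a b := by
    refine Finset.sum_congr rfl fun k hk => ?_
    have hk2 : 2*k ≤ n := by
      have := Finset.mem_range.mp hk
      omega
    have e1 := hBernstein_eq t h hh a b ha hb ha' hb' (n-k) k (n-2*k) (by omega)
    have e2 := Bint_shift ha' hb' k (n-2*k)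
    rw [show k + (n-2*k) = n - k by omega] at e2
    have e3 := Bint_shift_integral (a := a) hb' k (n-2*k)
    have e4 : (∏ i ∈ Finset.range k, (a + i)) * (∏ i ∈ Finset.range (n-2*k), (b + i)) /
        (∏ i ∈ Finset.range (n-k), (a + b + i))
        = Bint (a+(k:ℝ)) (b+((n-2*k : ℕ):ℝ)) / Bint a b := by
      rw [e2]
      field_simp
    rw [e1, e4, e3, mul_div_assoc]
  rw [lhs1]
  -- Step 2: exchange sum and integral
  have lhs2 : ∑ k ∈ Finset.range (n / 2 + 1), ((n-k).choose k : ℝ) *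
          (∫ x in Ioc (0:ℝ) 1, x ^ (a-1) * (1-x) ^ (b-1) * (x^k * (1-x)^(n-2*k))) / Bint a b
      = (∫ x in Ioc (0:ℝ) 1, x ^ (a-1) * (1-x) ^ (b-1) * Qpoly n x) / Bint a b := by
    rw [← Finset.sum_div]
    congr 1
    rw [show (∑ k ∈ Finset.range (n / 2 + 1), ((n-k).choose k : ℝ) *
          ∫ x in Ioc (0:ℝ) 1, x ^ (a-1) * (1-x) ^ (b-1) * (x^k * (1-x)^(n-2*k)))
        = ∑ k ∈ Finset.range (n / 2 + 1),
          ∫ x in Ioc (0:ℝ) 1, ((n-k).choose k : ℝ) *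
            (x ^ (a-1) * (1-x) ^ (b-1) * (x^k * (1-x)^(n-2*k))) from
      Finset.sum_congr rfl fun k _ => (MeasureTheory.integral_const_mul _ _).symm]
    rw [← MeasureTheory.integral_finset_sum _ fun k _ => (ikey k).const_mul _]
    refine MeasureTheory.integral_congr_ae (ae_of_all _ fun x => ?_)
    dsimp only
    rw [← sum_eq_Q n x, Finset.mul_sum]
    exact Finset.sum_congr rfl fun k _ => by ring
  rw [lhs2]
  -- Step 3: split the integral
  have lhs3 : ∫ x in Ioc (0:ℝ) 1, x ^ (a-1) * (1-x) ^ (b-1) * Qpoly n x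
      = (∫ x in Ioc (0:ℝ) 1, x ^ (a-1) * (1-x) ^ (b-1) * (1/(1+x)))
        + (-1:ℝ)^n * ∫ x in Ioc (0:ℝ) 1,
            x ^ (a-1) * (1-x) ^ (b-1) * (x^(n+1) * (1/(1+x))) := by
    rw [← MeasureTheory.integral_const_mul, ← MeasureTheory.integral_add i1 (i2.const_mul _)]
    refine setIntegral_congr_fun measurableSet_Ioc fun x hx => ?_
    have hx1 : (0:ℝ) < 1 + x := by linarith [hx.1]
    have hq : Qpoly n x = (1 + (-1:ℝ)^n * x^(n+1))/(1+x) := by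
      rw [eq_div_iff hx1.ne']
      linarith [Qpoly_eval n x]
    rw [hq]
    field_simp
  rw [lhs3]
  -- Step 4: identify with the RHS
  rw [hBdef]
  have rhs1 : (∫ x in (0:ℝ)..1, x ^ (a-1) * (1-x) ^ (b-1) / ((1+x) * Bint a b))
      = (∫ x in Ioc (0:ℝ) 1, x ^ (a-1) * (1-x) ^ (b-1) * (1/(1+x))) / Bint a b := by
    rw [intervalIntegral.integral_of_le zero_le_one, ← MeasureTheory.integral_div]
    refine setIntegral_congr_fun measurableSet_Ioc fun x hx => ?_
    rw [mul_one_div, div_div]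
  have rhs2 : (∫ x in (0:ℝ)..1, x ^ (a + (n:ℝ)) * (1-x) ^ (b-1) / ((1+x) * Bint a b))
      = (∫ x in Ioc (0:ℝ) 1,
          x ^ (a-1) * (1-x) ^ (b-1) * (x^(n+1) * (1/(1+x)))) / Bint a b := by
    rw [intervalIntegral.integral_of_le zero_le_one, ← MeasureTheory.integral_div]
    refine setIntegral_congr_fun measurableSet_Ioc fun x hx => ?_
    have hx0 : (0:ℝ) < x := hx.1
    have e : x ^ (a + (n:ℝ)) = x ^ (a-1) * x^(n+1) := by
      rw [← Real.rpow_natCast x (n+1), ← Real.rpow_add hx0]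
      congr 1
      push_cast
      ring
    have hx1 : (1:ℝ)+x ≠ 0 := by linarith
    rw [e]
    field_simp
  rw [rhs1, rhs2, show ((-1:ℝ))^(n+2) = (-1:ℝ)^n by rw [pow_add]; norm_num]
  ring
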